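/- arXiv:1105.3884 — 2 statements merged into one kernel-verified Lean document; each statement's English description precedes it below -/
import Mathlib

section
/- With notation as above, the fuzzy Prokhorov function M̂ satisfies the fuzzy triangle inequality with respect to the Łukasiewicz t-norm: M̂(μ, ν, t) * M̂(ν, τ, s) ≤ M̂(μ, τ, t + s) for all μ, ν, τ ∈ P(X) and t, s > 0, where a * b = max(a + b - 1, 0). -/
open Set MeasureTheory Filter Topology

noncomputable section

/-- The Łukasiewicz t-norm. -/
def luk (a b : ℝ) : ℝ := max (a + b - 1) 0

/-- A continuous t-norm on `[0,1]`. -/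
structure IsContinuousTNorm (star : ℝ → ℝ → ℝ) : Prop where
  maps_to : ∀ a b, a ∈ Icc (0:ℝ) 1 → b ∈ Icc (0:ℝ) 1 → star a b ∈ Icc (0:ℝ) 1
  comm : ∀ a b, a ∈ Icc (0:ℝ) 1 → b ∈ Icc (0:ℝ) 1 → star a b = star b a
  assoc : ∀ a b c, a ∈ Icc (0:ℝ) 1 → b ∈ Icc (0:ℝ) 1 → c ∈ Icc (0:ℝ) 1 →
    star (star a b) c = star a (star b c)
  continuous : ContinuousOn (fun p : ℝ × ℝ => star p.1 p.2) (Icc 0 1 ×ˢ Icc 0 1)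
  one_right : ∀ a, a ∈ Icc (0:ℝ) 1 → star a 1 = a
  mono : ∀ a b c d, a ∈ Icc (0:ℝ) 1 → b ∈ Icc (0:ℝ) 1 → c ∈ Icc (0:ℝ) 1 →
    d ∈ Icc (0:ℝ) 1 → a ≤ c → b ≤ d → star a b ≤ star c d

/-- A fuzzy metric (George–Veeramani) with respect to a t-norm `star`. -/
structure IsFuzzyMetric {X : Type*} (M : X → X → ℝ → ℝ) (star : ℝ → ℝ → ℝ) : Prop where
  pos : ∀ x y t, 0 < t → 0 < M x y t
  le_one : ∀ x y t, 0 < t → M x y t ≤ 1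
  eq_one_iff : ∀ x y t, 0 < t → (M x y t = 1 ↔ x = y)
  symm : ∀ x y t, 0 < t → M x y t = M y x t
  triangle : ∀ x y z t s, 0 < t → 0 < s → star (M x y t) (M y z s) ≤ M x z (t + s)
  continuousOn : ∀ x y, ContinuousOn (fun t => M x y t) (Ioi (0:ℝ))

/-- The open ball `B(x,r,t)` in a fuzzy metric space. -/
def fmBall {X : Type*} (M : X → X → ℝ → ℝ) (x : X) (r t : ℝ) : Set X :=
  {y | 1 - r < M x y t}

/-- The `r,t`-expansion `A^{r,t}` of a set `A`. -/
def fmExpand {X : Type*} (M : X → X → ℝ → ℝ) (A : Set X) (r t : ℝ) : Set X :=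
  ⋃ x ∈ A, fmBall M x r t

/-- The fuzzy metric `M` generates the given topology on `X`. -/
def GeneratesTopology {X : Type*} [TopologicalSpace X] (M : X → X → ℝ → ℝ) : Prop :=
  TopologicalSpace.IsTopologicalBasis
    {s : Set X | ∃ x r t, 0 < r ∧ r < 1 ∧ 0 < t ∧ s = fmBall M x r t}

/-- The set of admissible radii in the definition of the fuzzy Prokhorov metric. -/
def prokSet {X : Type*} [MeasurableSpace X] (M : X → X → ℝ → ℝ)
    (μ ν : Measure X) (t : ℝ) : Set ℝ :=
  {r | 0 < r ∧ r < 1 ∧ ∀ A : Set X, MeasurableSet A →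
    μ A ≤ ν (fmExpand M A r t) + ENNReal.ofReal r ∧
    ν A ≤ μ (fmExpand M A r t) + ENNReal.ofReal r}

/-- The fuzzy Prokhorov function `M̂` on measures. -/
def fuzzyProkhorov {X : Type*} [MeasurableSpace X] (M : X → X → ℝ → ℝ)
    (μ ν : Measure X) (t : ℝ) : ℝ :=
  1 - sInf (prokSet M μ ν t)

lemma fmBall_isOpen {X : Type*} [TopologicalSpace X] {M : X → X → ℝ → ℝ}
    (hgen : GeneratesTopology M) (x : X) {r t : ℝ} (hr0 : 0 < r) (hr1 : r < 1) (ht : 0 < t) :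
    IsOpen (fmBall M x r t) :=
  hgen.isOpen ⟨x, r, t, hr0, hr1, ht, rfl⟩

lemma fmExpand_isOpen {X : Type*} [TopologicalSpace X] {M : X → X → ℝ → ℝ}
    (hgen : GeneratesTopology M) (A : Set X) {r t : ℝ} (hr0 : 0 < r) (hr1 : r < 1)
    (ht : 0 < t) : IsOpen (fmExpand M A r t) :=
  isOpen_biUnion fun x _ => fmBall_isOpen hgen x hr0 hr1 ht

lemma fmExpand_expand_subset {X : Type*} {M : X → X → ℝ → ℝ}
    (hM : IsFuzzyMetric M luk) (A : Set X) {r r' t s : ℝ} (ht : 0 < t) (hs : 0 < s) :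
    fmExpand M (fmExpand M A r t) r' s ⊆ fmExpand M A (r + r') (t + s) := by
  intro z hz
  simp only [fmExpand, mem_iUnion, exists_prop] at hz ⊢
  obtain ⟨y, ⟨x, hx, hxy⟩, hyz⟩ := hz
  refine ⟨x, hx, ?_⟩
  have h1 : 1 - r < M x y t := hxy
  have h2 : 1 - r' < M y z s := hyz
  have h3 := hM.triangle x y z t s ht hs
  have h4 : M x y t + M y z s - 1 ≤ luk (M x y t) (M y z s) := le_max_left _ _
  show 1 - (r + r') < M x z (t + s)
  linarith

lemma prokSet_comp {X : Type*} [TopologicalSpace X] [MeasurableSpace X] [BorelSpace X]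
    {M : X → X → ℝ → ℝ} (hM : IsFuzzyMetric M luk) (hgen : GeneratesTopology M)
    {μ ν τ : Measure X} {t s r r' : ℝ} (ht : 0 < t) (hs : 0 < s)
    (hr : r ∈ prokSet M μ ν t) (hr' : r' ∈ prokSet M ν τ s) (hlt : r + r' < 1) :
    r + r' ∈ prokSet M μ τ (t + s) := by
  obtain ⟨hr0, hr1, h1⟩ := hr
  obtain ⟨hr'0, hr'1, h2⟩ := hr'
  refine ⟨by linarith, hlt, fun A hA => ?_⟩
  have hofr : ENNReal.ofReal (r + r') = ENNReal.ofReal r + ENNReal.ofReal r' :=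
    ENNReal.ofReal_add hr0.le hr'0.le
  constructor
  · have e1 := (h1 A hA).1
    have hmeas : MeasurableSet (fmExpand M A r t) :=
      (fmExpand_isOpen hgen A hr0 hr1 ht).measurableSet
    have e2 := (h2 _ hmeas).1
    have e3 : τ (fmExpand M (fmExpand M A r t) r' s) ≤ τ (fmExpand M A (r + r') (t + s)) :=
      measure_mono (fmExpand_expand_subset hM A ht hs)
    calc μ A ≤ ν (fmExpand M A r t) + ENNReal.ofReal r := e1
      _ ≤ (τ (fmExpand M (fmExpand M A r t) r' s) + ENNReal.ofReal r') + ENNReal.ofReal r :=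
        add_le_add_left e2 _
      _ = τ (fmExpand M (fmExpand M A r t) r' s) + ENNReal.ofReal (r + r') := by
        rw [hofr, add_assoc, add_comm (ENNReal.ofReal r')]
      _ ≤ τ (fmExpand M A (r + r') (t + s)) + ENNReal.ofReal (r + r') := add_le_add_left e3 _
  · have e1 := (h2 A hA).2
    have hmeas : MeasurableSet (fmExpand M A r' s) :=
      (fmExpand_isOpen hgen A hr'0 hr'1 hs).measurableSet
    have e2 := (h1 _ hmeas).2
    have e3 : fmExpand M (fmExpand M A r' s) r t ⊆ fmExpand M A (r + r') (t + s) := by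
      have := fmExpand_expand_subset hM (M := M) (r := r') (r' := r) A hs ht
      rwa [add_comm r' r, add_comm s t] at this
    calc τ A ≤ ν (fmExpand M A r' s) + ENNReal.ofReal r' := e1
      _ ≤ (μ (fmExpand M (fmExpand M A r' s) r t) + ENNReal.ofReal r) + ENNReal.ofReal r' :=
        add_le_add_left e2 _
      _ = μ (fmExpand M (fmExpand M A r' s) r t) + ENNReal.ofReal (r + r') := by
        rw [hofr, add_assoc]
      _ ≤ μ (fmExpand M A (r + r') (t + s)) + ENNReal.ofReal (r + r') :=
        add_le_add_left (measure_mono e3) _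

lemma exists_pos_lt_M {X : Type*} [TopologicalSpace X] [CompactSpace X] [Nonempty X]
    {M : X → X → ℝ → ℝ} (hM : IsFuzzyMetric M luk) (hgen : GeneratesTopology M)
    {t : ℝ} (ht : 0 < t) : ∃ c > 0, ∀ y z : X, c < M y z t := by
  have ht2 : 0 < t / 2 := by linarith
  have ht4 : 0 < t / 4 := by linarith
  set m : X × X → ℝ := fun p => M p.1 p.2 (t / 2) with hm
  have hmpos : ∀ p : X × X, 0 < m p := fun p => hM.pos _ _ _ ht2
  have hmle : ∀ p : X × X, m p ≤ 1 := fun p => hM.le_one _ _ _ ht2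
  set U : X × X → Set (X × X) := fun p =>
    (fmBall M p.1 (m p / 4) (t / 4)) ×ˢ (fmBall M p.2 (m p / 4) (t / 4)) with hU
  have hopen : ∀ p, IsOpen (U p) := fun p =>
    (fmBall_isOpen hgen _ (by linarith [hmpos p]) (by linarith [hmle p]) ht4).prod
      (fmBall_isOpen hgen _ (by linarith [hmpos p]) (by linarith [hmle p]) ht4)
  have hself : ∀ p : X × X, p ∈ U p := by
    intro p
    have e1 : M p.1 p.1 (t / 4) = 1 := (hM.eq_one_iff _ _ _ ht4).2 rfl
    have e2 : M p.2 p.2 (t / 4) = 1 := (hM.eq_one_iff _ _ _ ht4).2 rfl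
    exact ⟨show 1 - m p / 4 < M p.1 p.1 (t / 4) by rw [e1]; linarith [hmpos p],
           show 1 - m p / 4 < M p.2 p.2 (t / 4) by rw [e2]; linarith [hmpos p]⟩
  have hcov : (univ : Set (X × X)) ⊆ ⋃ p, U p := fun p _ => mem_iUnion.2 ⟨p, hself p⟩
  obtain ⟨F, hF⟩ := isCompact_univ.elim_finite_subcover U hopen hcov
  obtain ⟨x0⟩ := ‹Nonempty X›
  have hFne : F.Nonempty := by
    have := hF (mem_univ (x0, x0))
    simp only [mem_iUnion, exists_prop] at this
    obtain ⟨p, hp, -⟩ := this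
    exact ⟨p, hp⟩
  refine ⟨F.inf' hFne m / 2, by
    have : ∀ p ∈ F, (0:ℝ) < m p := fun p _ => hmpos p
    have h := (Finset.lt_inf'_iff hFne (f := m) (a := (0:ℝ))).2 this
    linarith, ?_⟩
  intro y z
  have := hF (mem_univ (y, z))
  simp only [mem_iUnion, exists_prop] at this
  obtain ⟨p, hpF, hymem, hzmem⟩ := this
  have hy : 1 - m p / 4 < M p.1 y (t / 4) := hymem
  have hz : 1 - m p / 4 < M p.2 z (t / 4) := hzmem
  have h2 := hM.triangle p.1 p.2 z (t / 2) (t / 4) ht2 ht4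
  have h2' : m p + M p.2 z (t / 4) - 1 ≤ luk (m p) (M p.2 z (t / 4)) := le_max_left _ _
  have hmid : 3 * m p / 4 < M p.1 z (t / 2 + t / 4) := by linarith
  have h1 := hM.triangle y p.1 z (t / 4) (t / 2 + t / 4) ht4 (by linarith)
  have h1' : M y p.1 (t / 4) + M p.1 z (t / 2 + t / 4) - 1 ≤
      luk (M y p.1 (t / 4)) (M p.1 z (t / 2 + t / 4)) := le_max_left _ _
  have hsymm : M y p.1 (t / 4) = M p.1 y (t / 4) := hM.symm _ _ _ ht4
  have hteq : t / 4 + (t / 2 + t / 4) = t := by ring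
  rw [hteq, hsymm] at h1
  have hle : F.inf' hFne m ≤ m p := Finset.inf'_le m hpF
  have : m p / 2 < M y z t := by rw [hsymm] at h1'; linarith
  linarith

lemma prokSet_nonempty {X : Type*} [TopologicalSpace X] [CompactSpace X]
    [MeasurableSpace X] [BorelSpace X]
    {M : X → X → ℝ → ℝ} (hM : IsFuzzyMetric M luk) (hgen : GeneratesTopology M)
    (μ ν : ProbabilityMeasure X) {t : ℝ} (ht : 0 < t) :
    (prokSet M (μ : Measure X) (ν : Measure X) t).Nonempty := by
  have hne : Nonempty X := by
    rcases isEmpty_or_nonempty X with h | h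
    · exfalso
      have h1 : (μ : Measure X) univ = 1 := measure_univ
      rw [Set.univ_eq_empty_iff.mpr h] at h1
      simp at h1
    · exact h
  obtain ⟨c, hc, hcM⟩ := exists_pos_lt_M hM hgen ht
  set r : ℝ := max (1 - c) (1 / 2) with hrdef
  have hr0 : (0:ℝ) < r := lt_of_lt_of_le (by norm_num) (le_max_right _ _)
  have hr1 : r < 1 := max_lt (by linarith) (by norm_num)
  have hrc : 1 - r ≤ c := by
    have := le_max_left (1 - c) (1 / 2)
    linarith
  have hexp : ∀ A : Set X, A.Nonempty → fmExpand M A r t = univ := by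
    intro A ⟨a, ha⟩
    refine eq_univ_of_forall fun y => ?_
    exact mem_biUnion ha (show 1 - r < M a y t from lt_of_le_of_lt hrc (hcM a y))
  refine ⟨r, hr0, hr1, fun A _ => ?_⟩
  rcases A.eq_empty_or_nonempty with rfl | hA
  · constructor <;> simp
  · constructor
    · calc (μ : Measure X) A ≤ 1 := prob_le_one
        _ = (ν : Measure X) (fmExpand M A r t) := by rw [hexp A hA, measure_univ]
        _ ≤ _ := le_self_add
    · calc (ν : Measure X) A ≤ 1 := prob_le_one
        _ = (μ : Measure X) (fmExpand M A r t) := by rw [hexp A hA, measure_univ]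
        _ ≤ _ := le_self_add

/-- fuzzy triangle inequality for the fuzzy Prokhorov function. -/
theorem fuzzyProkhorov_triangle {X : Type*} [TopologicalSpace X] [CompactSpace X]
    [MeasurableSpace X] [BorelSpace X]
    (M : X → X → ℝ → ℝ) (hM : IsFuzzyMetric M luk) (hgen : GeneratesTopology M)
    (μ ν τ : ProbabilityMeasure X) (t s : ℝ) (ht : 0 < t) (hs : 0 < s) :
    luk (fuzzyProkhorov M (μ : Measure X) (ν : Measure X) t)
        (fuzzyProkhorov M (ν : Measure X) (τ : Measure X) s) ≤
      fuzzyProkhorov M (μ : Measure X) (τ : Measure X) (t + s) := by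
  set P1 := prokSet M (μ : Measure X) (ν : Measure X) t with hP1
  set P2 := prokSet M (ν : Measure X) (τ : Measure X) s with hP2
  set P3 := prokSet M (μ : Measure X) (τ : Measure X) (t + s) with hP3
  have hP1ne : P1.Nonempty := prokSet_nonempty hM hgen μ ν ht
  have hP2ne : P2.Nonempty := prokSet_nonempty hM hgen ν τ hs
  have hP3ne : P3.Nonempty := prokSet_nonempty hM hgen μ τ (by linarith)
  have hbdd1 : BddBelow P1 := ⟨0, fun x hx => hx.1.le⟩
  have hbdd2 : BddBelow P2 := ⟨0, fun x hx => hx.1.le⟩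
  have hbdd3 : BddBelow P3 := ⟨0, fun x hx => hx.1.le⟩
  set a := sInf P1
  set b := sInf P2
  set c := sInf P3
  have ha0 : 0 ≤ a := Real.sInf_nonneg fun x hx => hx.1.le
  have hb0 : 0 ≤ b := Real.sInf_nonneg fun x hx => hx.1.le
  have hc0 : 0 ≤ c := Real.sInf_nonneg fun x hx => hx.1.le
  obtain ⟨r3, hr3⟩ := hP3ne
  have hc1 : c ≤ 1 := le_trans (csInf_le hbdd3 hr3) hr3.2.1.le
  have hkey : c ≤ a + b := by
    by_contra hcon
    push_neg at hcon
    set ε := (c - (a + b)) / 4 with hε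
    have hεpos : 0 < ε := by simp only [hε]; linarith
    obtain ⟨r, hrP, hrlt⟩ := Real.lt_sInf_add_pos hP1ne hεpos
    obtain ⟨r', hr'P, hr'lt⟩ := Real.lt_sInf_add_pos hP2ne hεpos
    have hsum : r + r' < c := by simp only [hε] at hrlt hr'lt ⊢; linarith
    have hmem : r + r' ∈ P3 := prokSet_comp hM hgen ht hs hrP hr'P (by linarith)
    have := csInf_le hbdd3 hmem
    linarith
  simp only [fuzzyProkhorov, luk]
  apply max_le
  · change 1 - a + (1 - b) - 1 ≤ 1 - c
    linarith
  · linarith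
end
end

section
/- Let (X, M, *) be a compact fuzzy metric space with the Łukasiewicz t-norm. Then (P(X), M̂, *) is a fuzzy metric space, where P(X) is the set of Borel probability measures on X and M̂ is the fuzzy Prokhorov function. -/
open Set MeasureTheory Filter Topology

noncomputable section

section Helpers
set_option linter.unusedSectionVars false
set_option linter.unusedVariables false
set_option linter.unusedTactic false

variable {X : Type*} [TopologicalSpace X] [CompactSpace X] [MeasurableSpace X] [BorelSpace X]
  {M : X → X → ℝ → ℝ}

theorem luk_lower (a b : ℝ) : a + b - 1 ≤ luk a b := le_max_left _ _

theorem M_self (hM : IsFuzzyMetric M luk) (x : X) {t : ℝ} (ht : 0 < t) : M x x t = 1 :=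
  (hM.eq_one_iff x x t ht).mpr rfl

theorem M_mono (hM : IsFuzzyMetric M luk) (x y : X) {s t : ℝ} (hs : 0 < s) (hst : s ≤ t) :
    M x y s ≤ M x y t := by
  rcases eq_or_lt_of_le hst with h | h
  · rw [h]
  · have h2 := hM.triangle x y y s (t - s) hs (by linarith)
    have h3 : M y y (t - s) = 1 := M_self hM y (by linarith)
    have h4 := luk_lower (M x y s) (M y y (t - s))
    rw [show s + (t - s) = t by ring] at h2
    linarith

theorem tri' (hM : IsFuzzyMetric M luk) (x y z : X) {t s : ℝ} (ht : 0 < t) (hs : 0 < s) :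
    M x y t + M y z s - 1 ≤ M x z (t + s) :=
  le_trans (luk_lower _ _) (hM.triangle x y z t s ht hs)

theorem tri3 (hM : IsFuzzyMetric M luk) (x x' y' y : X) {s t' s' : ℝ}
    (hs : 0 < s) (ht' : 0 < t') (hs' : 0 < s') :
    M x x' s + M x' y' t' + M y' y s' - 2 ≤ M x y (s + t' + s') := by
  have h1 := tri' hM x x' y' hs ht'
  have h2 := tri' hM x y' y (by linarith : (0:ℝ) < s + t') hs'
  linarith

theorem isOpen_fmBall (hM : IsFuzzyMetric M luk) (hgen : GeneratesTopology M)
    (x : X) (r : ℝ) {t : ℝ} (ht : 0 < t) : IsOpen (fmBall M x r t) := by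
  rcases lt_or_ge r 1 with hr1 | hr1
  · rcases lt_or_ge 0 r with hr0 | hr0
    · exact hgen.isOpen ⟨x, r, t, hr0, hr1, ht, rfl⟩
    · have : fmBall M x r t = ∅ := by
        ext y
        simp only [fmBall, mem_setOf_eq, mem_empty_iff_false, iff_false, not_lt]
        have := hM.le_one x y t ht
        linarith
      rw [this]; exact isOpen_empty
  · have : fmBall M x r t = univ := by
      ext y
      simp only [fmBall, mem_setOf_eq, mem_univ, iff_true]
      have := hM.pos x y t ht
      linarith
    rw [this]; exact isOpen_univ

theorem self_mem_fmBall (hM : IsFuzzyMetric M luk) (x : X) {r t : ℝ} (hr : 0 < r) (ht : 0 < t) :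
    x ∈ fmBall M x r t := by
  simp only [fmBall, mem_setOf_eq, M_self hM x ht]; linarith

theorem isOpen_fmExpand (hM : IsFuzzyMetric M luk) (hgen : GeneratesTopology M)
    (A : Set X) (r : ℝ) {t : ℝ} (ht : 0 < t) : IsOpen (fmExpand M A r t) :=
  isOpen_biUnion fun x _ => isOpen_fmBall hM hgen x r ht

theorem subset_fmExpand (hM : IsFuzzyMetric M luk) (A : Set X) {r t : ℝ}
    (hr : 0 < r) (ht : 0 < t) : A ⊆ fmExpand M A r t := fun x hx =>
  mem_biUnion hx (self_mem_fmBall hM x hr ht)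

theorem fmExpand_subset (hM : IsFuzzyMetric M luk) (A : Set X) {r r' t t' : ℝ}
    (h : ∀ x y : X, 1 - r < M x y t → 1 - r' < M x y t') :
    fmExpand M A r t ⊆ fmExpand M A r' t' := by
  intro y hy
  obtain ⟨x, hx, hxy⟩ := mem_iUnion₂.mp hy
  exact mem_biUnion hx (h x y hxy)

theorem fmExpand_fmExpand (hM : IsFuzzyMetric M luk) (A : Set X) {r r' t s : ℝ}
    (ht : 0 < t) (hs : 0 < s) :
    fmExpand M (fmExpand M A r t) r' s ⊆ fmExpand M A (r + r') (t + s) := by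
  intro y hy
  obtain ⟨x', hx', hxy'⟩ := mem_iUnion₂.mp hy
  obtain ⟨x, hx, hxx'⟩ := mem_iUnion₂.mp hx'
  refine mem_biUnion hx ?_
  have := tri' hM x x' y ht hs
  simp only [fmBall, mem_setOf_eq] at *
  linarith


theorem isOpen_lt_M (hM : IsFuzzyMetric M luk) (hgen : GeneratesTopology M)
    {t c : ℝ} (ht : 0 < t) : IsOpen {p : X × X | c < M p.1 p.2 t} := by
  rw [isOpen_iff_forall_mem_open]
  rintro ⟨x₀, y₀⟩ hp
  simp only [mem_setOf_eq] at hp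
  -- find t' < t with c < M x₀ y₀ t'
  have hc : ContinuousAt (fun u => M x₀ y₀ u) t :=
    (hM.continuousOn x₀ y₀).continuousAt (Ioi_mem_nhds ht)
  have hev : (fun u => M x₀ y₀ u) ⁻¹' (Ioi c) ∈ 𝓝 t := hc (Ioi_mem_nhds hp)
  obtain ⟨η, hη, hball⟩ := Metric.mem_nhds_iff.mp hev
  set t' : ℝ := max (t - η / 2) (t / 2) with ht'def
  have ht'pos : 0 < t' := lt_of_lt_of_le (by linarith) (le_max_right _ _)
  have ht'lt : t' < t := max_lt (by linarith) (by linarith)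
  have ht'mem : t' ∈ Metric.ball t η := by
    rw [Metric.mem_ball, Real.dist_eq, abs_of_nonpos (by linarith)]
    have : t - η / 2 ≤ t' := le_max_left _ _
    linarith
  have hct' : c < M x₀ y₀ t' := hball ht'mem
  set ρ : ℝ := (M x₀ y₀ t' - c) / 2 with hρdef
  have hρ : 0 < ρ := by simp only [hρdef]; linarith
  set s : ℝ := (t - t') / 2 with hsdef
  have hs : 0 < s := by simp only [hsdef]; linarith
  refine ⟨fmBall M x₀ ρ s ×ˢ fmBall M y₀ ρ s, ?_, 
    (isOpen_fmBall hM hgen x₀ ρ hs).prod (isOpen_fmBall hM hgen y₀ ρ hs), 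
    ⟨self_mem_fmBall hM x₀ hρ hs, self_mem_fmBall hM y₀ hρ hs⟩⟩
  rintro ⟨x, y⟩ ⟨hx, hy⟩
  simp only [fmBall, mem_setOf_eq] at hx hy ⊢
  have h1 : M x x₀ s = M x₀ x s := hM.symm x x₀ s hs
  have h2 : M y₀ y s = M y₀ y s := rfl
  have h3 := tri3 hM x x₀ y₀ y hs ht'pos hs
  have hteq : s + t' + s = t := by simp only [hsdef]; ring
  rw [hteq] at h3
  have : M x₀ y₀ t' = c + 2 * ρ := by simp only [hρdef]; ring
  linarith

theorem unifPos (hM : IsFuzzyMetric M luk) (hgen : GeneratesTopology M)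
    {t : ℝ} (ht : 0 < t) : ∃ c : ℝ, 0 < c ∧ ∀ x y : X, c < M x y t := by
  have hcov : (univ : Set (X × X)) ⊆ ⋃ n : ℕ, {p : X × X | 1 / (n + 1) < M p.1 p.2 t} := by
    rintro ⟨x, y⟩ -
    obtain ⟨n, hn⟩ := exists_nat_one_div_lt (hM.pos x y t ht)
    exact mem_iUnion.mpr ⟨n, hn⟩
  obtain ⟨F, hF⟩ := isCompact_univ.elim_finite_subcover _
    (fun n : ℕ => isOpen_lt_M hM hgen ht) hcov
  refine ⟨1 / ((F.sup id : ℕ) + 1), by positivity, fun x y => ?_⟩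
  obtain ⟨n, hnF, hn⟩ := mem_iUnion₂.mp (hF (mem_univ (x, y)))
  simp only [mem_setOf_eq] at hn
  refine lt_of_le_of_lt ?_ hn
  have h1 : (n : ℝ) + 1 ≤ (F.sup id : ℕ) + 1 := by
    have := Finset.le_sup (f := id) hnF
    exact_mod_cast add_le_add_left (Nat.cast_le.mpr this) 1
  exact one_div_le_one_div_of_le (by positivity) h1

theorem unifCont (hM : IsFuzzyMetric M luk) (hgen : GeneratesTopology M)
    {t ε : ℝ} (ht : 0 < t) (hε : 0 < ε) :
    ∃ δ : ℝ, 0 < δ ∧ δ < t ∧ ∀ x y : X, M x y (t + δ) ≤ M x y (t - δ) + ε := by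
  -- for each pair p, get a local δ
  have key : ∀ p : X × X, ∃ d : ℝ, 0 < d ∧ d < t / 4 ∧
      M p.1 p.2 (t + 4 * d) ≤ M p.1 p.2 (t - 4 * d) + ε / 2 := by
    intro p
    have hc : ContinuousAt (fun u => M p.1 p.2 u) t :=
      (hM.continuousOn p.1 p.2).continuousAt (Ioi_mem_nhds ht)
    obtain ⟨η, hη, hb⟩ := Metric.continuousAt_iff.mp hc (ε / 4) (by linarith)
    refine ⟨min (η / 8) (t / 8), by positivity, 
      lt_of_le_of_lt (min_le_right _ _) (by linarith), ?_⟩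
    set d := min (η / 8) (t / 8) with hd
    have hd1 : d ≤ η / 8 := min_le_left _ _
    have hd2 : d ≤ t / 8 := min_le_right _ _
    have hd0 : 0 < d := by positivity
    have hplus : dist (t + 4 * d) t < η := by
      rw [Real.dist_eq, abs_of_nonneg (by linarith)]; linarith
    have hminus : dist (t - 4 * d) t < η := by
      rw [Real.dist_eq, abs_of_nonpos (by linarith)]; linarith
    have h1 := hb hplus
    have h2 := hb hminus
    rw [Real.dist_eq, abs_lt] at h1 h2
    linarith
  choose d hd0 hdt hdM using key
  -- cover X × X
  have hcov : (univ : Set (X × X)) ⊆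
      ⋃ p : X × X, fmBall M p.1 (ε / 8) (d p) ×ˢ fmBall M p.2 (ε / 8) (d p) := by
    rintro q -
    exact mem_iUnion.mpr ⟨q, self_mem_fmBall hM q.1 (by linarith) (hd0 q),
      self_mem_fmBall hM q.2 (by linarith) (hd0 q)⟩
  obtain ⟨F, hF⟩ := isCompact_univ.elim_finite_subcover _
    (fun p : X × X => (isOpen_fmBall hM hgen p.1 (ε/8) (hd0 p)).prod
      (isOpen_fmBall hM hgen p.2 (ε/8) (hd0 p))) hcov
  rcases F.eq_empty_or_nonempty with hFe | hFn
  · refine ⟨t / 2, by linarith, by linarith, fun x y => ?_⟩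
    exfalso
    have := hF (mem_univ (x, y))
    rw [hFe] at this
    simp at this
  · refine ⟨F.inf' hFn d, ?_, ?_, ?_⟩
    · rw [Finset.lt_inf'_iff]
      exact fun p _ => hd0 p
    · obtain ⟨p, hp⟩ := hFn
      exact lt_of_le_of_lt (Finset.inf'_le d hp) (lt_trans (hdt p) (by linarith))
    · intro x y
      set δ := F.inf' hFn d with hδdef
      have hδ0 : 0 < δ := by rw [hδdef, Finset.lt_inf'_iff]; exact fun p _ => hd0 p
      obtain ⟨p, hpF, hpmem⟩ := mem_iUnion₂.mp (hF (mem_univ (x, y)))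
      have hδd : δ ≤ d p := Finset.inf'_le d hpF
      obtain ⟨hx, hy⟩ := hpmem
      simp only [fmBall, mem_setOf_eq] at hx hy
      have hdp0 := hd0 p
      have hdpt := hdt p
      -- M x y (t+δ) ≤ M x y (t + d p)
      have e1 : M x y (t + δ) ≤ M x y (t + d p) := M_mono hM x y (by linarith) (by linarith)
      -- M x y (t + d p) ≤ M p.1 p.2 (t + 3 * d p) + ε/4
      have e2 : M p.1 p.2 (t + 3 * d p) ≥
          M p.1 x (d p) + M x y (t + d p) + M y p.2 (d p) - 2 := by
        have := tri3 hM p.1 x y p.2 (hd0 p) (by linarith : (0:ℝ) < t + d p) (hd0 p)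
        rw [show d p + (t + d p) + d p = t + 3 * d p by ring] at this
        exact this
      have hyx : M y p.2 (d p) = M p.2 y (d p) := hM.symm y p.2 (d p) (hd0 p)
      have e3 : M p.1 p.2 (t + 3 * d p) ≤ M p.1 p.2 (t + 4 * d p) :=
        M_mono hM p.1 p.2 (by linarith) (by linarith)
      -- lower bound side
      have e4 : M x y (t - d p) ≥
          M x p.1 (d p) + M p.1 p.2 (t - 3 * d p) + M p.2 y (d p) - 2 := by
        have := tri3 hM x p.1 p.2 y (hd0 p) (by linarith : (0:ℝ) < t - 3 * d p) (hd0 p)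
        rw [show d p + (t - 3 * d p) + d p = t - d p by ring] at this
        exact this
      have hxp : M x p.1 (d p) = M p.1 x (d p) := hM.symm x p.1 (d p) (hd0 p)
      have e5 : M p.1 p.2 (t - 4 * d p) ≤ M p.1 p.2 (t - 3 * d p) :=
        M_mono hM p.1 p.2 (by linarith) (by linarith)
      have e6 : M x y (t - d p) ≤ M x y (t - δ) := M_mono hM x y (by linarith) (by linarith)
      have e7 := hdM p
      linarith

theorem mem_closed_of_approx (hM : IsFuzzyMetric M luk) (hgen : GeneratesTopology M)
    {A : Set X} (hA : IsClosed A) {y : X} {t : ℝ} (ht : 0 < t)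
    (h : ∀ ρ : ℝ, 0 < ρ → ∃ x ∈ A, 1 - ρ < M x y t) : y ∈ A := by
  set K : {ρ : ℝ // 0 < ρ} → Set X := fun ρ => closure {x ∈ A | 1 - ρ.1 < M x y t} with hK
  have hdir : Directed (· ⊇ ·) K := by
    rintro ⟨ρ, hρ⟩ ⟨ρ', hρ'⟩
    refine ⟨⟨min ρ ρ', lt_min hρ hρ'⟩, ?_, ?_⟩ <;>
    · apply closure_mono
      rintro x ⟨hxA, hx⟩
      refine ⟨hxA, lt_of_le_of_lt ?_ hx⟩
      simp only [Subtype.coe_mk]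
      have h1 : min ρ ρ' ≤ ρ := min_le_left _ _
      have h2 : min ρ ρ' ≤ ρ' := min_le_right _ _
      first
      | (show (1:ℝ) - ρ ≤ 1 - min ρ ρ'; linarith)
      | (show (1:ℝ) - ρ' ≤ 1 - min ρ ρ'; linarith)
  have hne : ∀ ρ, (K ρ).Nonempty := by
    rintro ⟨ρ, hρ⟩
    obtain ⟨x, hxA, hx⟩ := h ρ hρ
    exact ⟨x, subset_closure ⟨hxA, hx⟩⟩
  obtain ⟨x, hx⟩ := IsCompact.nonempty_iInter_of_directed_nonempty_isCompact_isClosed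
    K hdir hne (fun ρ => isClosed_closure.isCompact) (fun ρ => isClosed_closure)
  have hxA : x ∈ A := by
    have := mem_iInter.mp hx ⟨1, one_pos⟩
    exact hA.closure_subset (closure_mono (fun z hz => hz.1) this)
  -- show x = y
  have hxy : x = y := by
    have key : ∀ s : ℝ, 0 < s → M x y (s + t) = 1 := by
      intro s hs
      have hub : ∀ ρ' ρ : ℝ, 0 < ρ' → 0 < ρ → 1 - ρ' - ρ ≤ M x y (s + t) := by
        intro ρ' ρ hρ' hρ
        have hxK : x ∈ K ⟨ρ, hρ⟩ := mem_iInter.mp hx ⟨ρ, hρ⟩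
        have hball : x ∈ fmBall M x ρ' s := self_mem_fmBall hM x hρ' hs
        obtain ⟨x', hx'mem, hx'A⟩ := _root_.mem_closure_iff.mp hxK
          (fmBall M x ρ' s) (isOpen_fmBall hM hgen x ρ' hs) hball
        obtain ⟨hx'A, hx't⟩ := hx'A
        simp only [fmBall, mem_setOf_eq] at hx'mem
        have := tri' hM x x' y hs ht
        linarith
      have h1 : ∀ ρ : ℝ, 0 < ρ → 1 - ρ ≤ M x y (s + t) := by
        intro ρ hρ
        have : ∀ n : ℕ, 1 - ρ/2 - ρ/2 ≤ M x y (s + t) := fun _ => hub (ρ/2) (ρ/2) (by linarith) (by linarith)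
        have := this 0
        linarith
      have hge : 1 ≤ M x y (s + t) := by
        by_contra hlt
        push_neg at hlt
        have := h1 ((1 - M x y (s + t)) / 2) (by linarith)
        linarith
      exact le_antisymm (hM.le_one x y (s + t) (by linarith)) hge
    exact (hM.eq_one_iff x y (1 + t) (by linarith)).mp (key 1 one_pos)
  rwa [hxy] at hxA

theorem prokSet_symm (μ ν : Measure X) (t : ℝ) : prokSet M μ ν t = prokSet M ν μ t := by
  ext r
  simp only [prokSet, mem_setOf_eq]
  refine and_congr_right fun _ => and_congr_right fun _ => ?_
  exact ⟨fun h A hA => ⟨(h A hA).2, (h A hA).1⟩, fun h A hA => ⟨(h A hA).2, (h A hA).1⟩⟩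

theorem exists_prokSet_lt_one (hM : IsFuzzyMetric M luk) (hgen : GeneratesTopology M)
    (μ ν : Measure X) [IsProbabilityMeasure μ] [IsProbabilityMeasure ν]
    {t : ℝ} (ht : 0 < t) : ∃ r ∈ prokSet M μ ν t, r < 1 := by
  obtain ⟨c, hc, hcM⟩ := unifPos hM hgen (X := X) ht
  set r : ℝ := 1 - min c 1 / 2 with hrdef
  have hmin : 0 < min c 1 := lt_min hc one_pos
  have hmin1 : min c 1 ≤ 1 := min_le_right _ _
  refine ⟨r, ⟨by simp only [hrdef]; linarith, by simp only [hrdef]; linarith, ?_⟩, 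
    by simp only [hrdef]; linarith⟩
  intro A hA
  rcases A.eq_empty_or_nonempty with rfl | ⟨x₀, hx₀⟩
  · simp [fmExpand]
  · have hexp : fmExpand M A r t = univ := by
      refine eq_univ_of_forall fun y => mem_biUnion hx₀ ?_
      simp only [fmBall, mem_setOf_eq, hrdef]
      have h1 : min c 1 ≤ c := min_le_left _ _
      have := hcM x₀ y
      linarith
    rw [hexp]
    constructor <;>
    · refine le_trans prob_le_one ?_
      simp only [measure_univ]
      exact le_self_add

theorem prokSet_nonneg (μ ν : Measure X) (t : ℝ) : 0 ≤ sInf (prokSet M μ ν t) :=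
  Real.sInf_nonneg fun r hr => le_of_lt hr.1

theorem bddBelow_prokSet (μ ν : Measure X) (t : ℝ) : BddBelow (prokSet M μ ν t) :=
  ⟨0, fun r hr => le_of_lt hr.1⟩

theorem sInf_prokSet_lt_one (hM : IsFuzzyMetric M luk) (hgen : GeneratesTopology M)
    (μ ν : Measure X) [IsProbabilityMeasure μ] [IsProbabilityMeasure ν]
    {t : ℝ} (ht : 0 < t) : sInf (prokSet M μ ν t) < 1 := by
  obtain ⟨r, hr, hr1⟩ := exists_prokSet_lt_one hM hgen μ ν ht
  exact lt_of_le_of_lt (csInf_le (bddBelow_prokSet μ ν t) hr) hr1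

theorem mem_prokSet_of_subset {μ ν : Measure X} {t₁ t₂ r r' : ℝ}
    (hr : r ∈ prokSet M μ ν t₁) (hrr' : r ≤ r') (hr'1 : r' < 1)
    (hsub : ∀ A : Set X, fmExpand M A r t₁ ⊆ fmExpand M A r' t₂) :
    r' ∈ prokSet M μ ν t₂ := by
  obtain ⟨hr0, hr1, h⟩ := hr
  refine ⟨lt_of_lt_of_le hr0 hrr', hr'1, fun A hA => ?_⟩
  obtain ⟨h1, h2⟩ := h A hA
  have hof : ENNReal.ofReal r ≤ ENNReal.ofReal r' := ENNReal.ofReal_le_ofReal hrr'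
  exact ⟨le_trans h1 (add_le_add (measure_mono (hsub A)) hof),
    le_trans h2 (add_le_add (measure_mono (hsub A)) hof)⟩

theorem mem_prokSet_add (hM : IsFuzzyMetric M luk) (hgen : GeneratesTopology M)
    {μ ν τ : Measure X} {t s r r' : ℝ} (ht : 0 < t) (hs : 0 < s)
    (hr : r ∈ prokSet M μ ν t) (hr' : r' ∈ prokSet M ν τ s) (h1 : r + r' < 1) :
    r + r' ∈ prokSet M μ τ (t + s) := by
  obtain ⟨hr0, hr1, h⟩ := hr
  obtain ⟨hr'0, hr'1, h'⟩ := hr'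
  refine ⟨by linarith, h1, fun A hA => ?_⟩
  have hofadd : ENNReal.ofReal (r + r') = ENNReal.ofReal r + ENNReal.ofReal r' :=
    ENNReal.ofReal_add (le_of_lt hr0) (le_of_lt hr'0)
  constructor
  · calc μ A ≤ ν (fmExpand M A r t) + ENNReal.ofReal r := (h A hA).1
    _ ≤ (τ (fmExpand M (fmExpand M A r t) r' s) + ENNReal.ofReal r') + ENNReal.ofReal r := by
        gcongr
        exact (h' _ (isOpen_fmExpand hM hgen A r ht).measurableSet).1
    _ ≤ τ (fmExpand M A (r + r') (t + s)) + ENNReal.ofReal (r + r') := by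
        rw [hofadd]
        have := measure_mono (μ := τ) (fmExpand_fmExpand hM A ht hs (r := r) (r' := r'))
        calc (τ (fmExpand M (fmExpand M A r t) r' s) + ENNReal.ofReal r') + ENNReal.ofReal r
            = τ (fmExpand M (fmExpand M A r t) r' s) + (ENNReal.ofReal r + ENNReal.ofReal r') := by
              ring
          _ ≤ _ := by gcongr
  · calc τ A ≤ ν (fmExpand M A r' s) + ENNReal.ofReal r' := (h' A hA).2
    _ ≤ (μ (fmExpand M (fmExpand M A r' s) r t) + ENNReal.ofReal r) + ENNReal.ofReal r' := by
        gcongr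
        exact (h _ (isOpen_fmExpand hM hgen A r' hs).measurableSet).2
    _ ≤ μ (fmExpand M A (r + r') (t + s)) + ENNReal.ofReal (r + r') := by
        rw [hofadd]
        have hsub : fmExpand M (fmExpand M A r' s) r t ⊆ fmExpand M A (r + r') (t + s) := by
          have := fmExpand_fmExpand hM A hs ht (r := r') (r' := r)
          rw [show r' + r = r + r' by ring, show s + t = t + s by ring] at this
          exact this
        have := measure_mono (μ := μ) hsub
        calc (μ (fmExpand M (fmExpand M A r' s) r t) + ENNReal.ofReal r) + ENNReal.ofReal r'
            = μ (fmExpand M (fmExpand M A r' s) r t) + (ENNReal.ofReal r + ENNReal.ofReal r') := by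
              ring
          _ ≤ _ := by gcongr

theorem measure_le_of_sInf_eq_zero (hM : IsFuzzyMetric M luk) (hgen : GeneratesTopology M)
    {μ ν : Measure X} [IsProbabilityMeasure μ] [IsProbabilityMeasure ν]
    {t : ℝ} (ht : 0 < t) (h0 : sInf (prokSet M μ ν t) = 0)
    {A : Set X} (hA : IsClosed A) : μ A ≤ ν A := by
  have hne : (prokSet M μ ν t).Nonempty := by
    obtain ⟨r, hr, _⟩ := exists_prokSet_lt_one hM hgen μ ν ht
    exact ⟨r, hr⟩
  have hseq : ∀ n : ℕ, ∃ r ∈ prokSet M μ ν t, r < 1 / (n + 1) := by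
    intro n
    apply exists_lt_of_csInf_lt hne
    rw [h0]; positivity
  choose r hrS hrlt using hseq
  set E : ℕ → Set X := fun k => fmExpand M A (r k) t with hE
  set C : ℕ → Set X := fun n => ⋃ k, E (n + k) with hC
  have hCanti : Antitone C := by
    intro n m hnm y hy
    obtain ⟨k, hk⟩ := mem_iUnion.mp hy
    exact mem_iUnion.mpr ⟨m - n + k, by rwa [show n + (m - n + k) = m + k by omega]⟩
  have hCopen : ∀ n, IsOpen (C n) := fun n =>
    isOpen_iUnion fun k => isOpen_fmExpand hM hgen A (r (n + k)) ht
  have hInt : (⋂ n, C n) ⊆ A := by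
    intro y hy
    refine mem_closed_of_approx hM hgen hA ht fun ρ hρ => ?_
    obtain ⟨n, hn⟩ := exists_nat_one_div_lt hρ
    obtain ⟨k, hk⟩ := mem_iUnion.mp (mem_iInter.mp hy n)
    obtain ⟨x, hxA, hxy⟩ := mem_iUnion₂.mp hk
    refine ⟨x, hxA, ?_⟩
    simp only [fmBall, mem_setOf_eq] at hxy
    have h1 : r (n + k) < 1 / ((n : ℝ) + (k : ℝ) + 1) := by
      have := hrlt (n + k); push_cast at this ⊢; linarith
    have h2 : (1 : ℝ) / (n + k + 1) ≤ 1 / (n + 1) := by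
      apply one_div_le_one_div_of_le (by positivity)
      push_cast; linarith [Nat.cast_nonneg (α := ℝ) k]
    linarith
  have htend : Tendsto (fun n => ν (C n) + ENNReal.ofReal (r n)) atTop (𝓝 (ν (⋂ n, C n))) := by
    have h1 : Tendsto (fun n => ν (C n)) atTop (𝓝 (ν (⋂ n, C n))) :=
      tendsto_measure_iInter_atTop
        (fun n => ((hCopen n).measurableSet).nullMeasurableSet) hCanti
        ⟨0, measure_ne_top ν _⟩
    have h2 : Tendsto (fun n : ℕ => ENNReal.ofReal (r n)) atTop (𝓝 0) := by
      rw [show (0 : ENNReal) = ENNReal.ofReal 0 by simp]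
      apply ENNReal.tendsto_ofReal
      apply squeeze_zero (fun n => le_of_lt (hrS n).1) (fun n => le_of_lt (hrlt n))
      exact tendsto_one_div_add_atTop_nhds_zero_nat
    have h3 := h1.add h2
    simpa using h3
  have hle : μ A ≤ ν (⋂ n, C n) := by
    refine ge_of_tendsto' htend fun n => ?_
    have h1 := ((hrS n).2.2 A hA.measurableSet).1
    have h2 : E n ⊆ C n := by
      intro y hy
      exact mem_iUnion.mpr ⟨0, by rwa [Nat.add_zero]⟩
    exact le_trans h1 (add_le_add (measure_mono h2) le_rfl)
  exact le_trans hle (measure_mono hInt)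

theorem measure_eq_of_sInf_eq_zero (hM : IsFuzzyMetric M luk) (hgen : GeneratesTopology M)
    {μ ν : Measure X} [IsProbabilityMeasure μ] [IsProbabilityMeasure ν]
    {t : ℝ} (ht : 0 < t) (h0 : sInf (prokSet M μ ν t) = 0) : μ = ν := by
  refine ext_of_generate_finite {s : Set X | IsClosed s} ?_ ?_ ?_ (by simp)
  · rw [BorelSpace.measurable_eq (α := X), borel_eq_generateFrom_isClosed]
  · exact fun s hs u hu _ => hs.inter hu
  · intro s hs
    refine le_antisymm (measure_le_of_sInf_eq_zero hM hgen ht h0 hs) ?_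
    have h0' : sInf (prokSet M ν μ t) = 0 := by rwa [prokSet_symm] at h0
    exact measure_le_of_sInf_eq_zero hM hgen ht h0' hs

theorem sInf_prokSet_close (hM : IsFuzzyMetric M luk) (hgen : GeneratesTopology M)
    (μ ν : Measure X) [IsProbabilityMeasure μ] [IsProbabilityMeasure ν]
    {t δ ε' t₁ t₂ : ℝ} (ht : 0 < t) (hδ0 : 0 < δ) (hδt : δ < t) (hε' : 0 < ε')
    (hunif : ∀ x y : X, M x y (t + δ) ≤ M x y (t - δ) + ε')
    (ht₁ : t₁ ∈ Ioo (t - δ) (t + δ)) (ht₂ : t₂ ∈ Ioo (t - δ) (t + δ)) :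
    sInf (prokSet M μ ν t₂) ≤ sInf (prokSet M μ ν t₁) + ε' := by
  have ht₁0 : 0 < t₁ := lt_trans (by linarith) ht₁.1
  have ht₂0 : 0 < t₂ := lt_trans (by linarith) ht₂.1
  have hne₁ : (prokSet M μ ν t₁).Nonempty := by
    obtain ⟨r, hr, _⟩ := exists_prokSet_lt_one hM hgen μ ν ht₁0
    exact ⟨r, hr⟩
  have key : ∀ r ∈ prokSet M μ ν t₁, sInf (prokSet M μ ν t₂) ≤ r + ε' := by
    intro r hr
    rcases lt_or_ge (r + ε') 1 with h1 | h1
    · refine csInf_le (bddBelow_prokSet μ ν t₂) ?_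
      refine mem_prokSet_of_subset hr (by linarith) h1 fun A => ?_
      refine fmExpand_subset hM A fun x y hxy => ?_
      have e1 : M x y t₁ ≤ M x y (t + δ) := M_mono hM x y ht₁0 (le_of_lt ht₁.2)
      have e2 : M x y (t - δ) ≤ M x y t₂ := M_mono hM x y (by linarith) (le_of_lt ht₂.1)
      have e3 := hunif x y
      linarith
    · have := sInf_prokSet_lt_one hM hgen μ ν ht₂0
      linarith
  have : sInf (prokSet M μ ν t₂) - ε' ≤ sInf (prokSet M μ ν t₁) :=
    le_csInf hne₁ fun r hr => by linarith [key r hr]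
  linarith

end Helpers

/-- `(P(X), M̂, *)` is a fuzzy metric space. -/
theorem fuzzyProkhorov_isFuzzyMetric {X : Type*} [TopologicalSpace X] [CompactSpace X]
    [MeasurableSpace X] [BorelSpace X]
    (M : X → X → ℝ → ℝ) (hM : IsFuzzyMetric M luk) (hgen : GeneratesTopology M) :
    IsFuzzyMetric
      (fun (μ ν : ProbabilityMeasure X) (t : ℝ) =>
        fuzzyProkhorov M (μ : Measure X) (ν : Measure X) t) luk := by
  constructor
  · -- pos
    intro μ ν t ht
    simp only [fuzzyProkhorov]
    have := sInf_prokSet_lt_one hM hgen (μ : Measure X) (ν : Measure X) ht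
    linarith
  · -- le_one
    intro μ ν t ht
    simp only [fuzzyProkhorov]
    have := prokSet_nonneg (M := M) (μ : Measure X) (ν : Measure X) t
    linarith
  · -- eq_one_iff
    intro μ ν t ht
    simp only [fuzzyProkhorov]
    constructor
    · intro h
      have h0 : sInf (prokSet M (μ : Measure X) (ν : Measure X) t) = 0 := by linarith
      exact ProbabilityMeasure.toMeasure_injective (measure_eq_of_sInf_eq_zero hM hgen ht h0)
    · rintro rfl
      have hsub : Ioo (0:ℝ) 1 ⊆ prokSet M (μ : Measure X) (μ : Measure X) t := by
        rintro r ⟨hr0, hr1⟩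
        refine ⟨hr0, hr1, fun A hA => ?_⟩
        have h1 : (μ : Measure X) A ≤ (μ : Measure X) (fmExpand M A r t) :=
          measure_mono (subset_fmExpand hM A hr0 ht)
        exact ⟨le_trans h1 le_self_add, le_trans h1 le_self_add⟩
      have h1 : sInf (prokSet M (μ : Measure X) (μ : Measure X) t) ≤ 0 := by
        have := csInf_le_csInf (bddBelow_prokSet (M := M) (μ : Measure X) (μ : Measure X) t)
          ⟨1/2, by norm_num⟩ hsub
        rwa [csInf_Ioo (by norm_num : (0:ℝ) < 1)] at this
      have h2 := prokSet_nonneg (M := M) (μ : Measure X) (μ : Measure X) t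
      have h3 : sInf (prokSet M (μ : Measure X) (μ : Measure X) t) = 0 := le_antisymm h1 h2
      rw [h3]; ring
  · -- symm
    intro μ ν t ht
    simp only [fuzzyProkhorov]
    rw [prokSet_symm]
  · -- triangle
    intro μ ν τ t s ht hs
    simp only [fuzzyProkhorov]
    set a := sInf (prokSet M (μ : Measure X) (ν : Measure X) t) with ha
    set b := sInf (prokSet M (ν : Measure X) (τ : Measure X) s) with hb
    set c := sInf (prokSet M (μ : Measure X) (τ : Measure X) (t + s)) with hc
    have hne₁ : (prokSet M (μ : Measure X) (ν : Measure X) t).Nonempty := by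
      obtain ⟨r, hr, _⟩ := exists_prokSet_lt_one hM hgen (μ : Measure X) (ν : Measure X) ht
      exact ⟨r, hr⟩
    have hne₂ : (prokSet M (ν : Measure X) (τ : Measure X) s).Nonempty := by
      obtain ⟨r, hr, _⟩ := exists_prokSet_lt_one hM hgen (ν : Measure X) (τ : Measure X) hs
      exact ⟨r, hr⟩
    have hc1 : c < 1 :=
      sInf_prokSet_lt_one hM hgen (μ : Measure X) (τ : Measure X) (by linarith)
    have hkey : c ≤ a + b := by
      refine le_of_forall_pos_le_add fun ε hε => ?_
      obtain ⟨r, hrS, hr⟩ := exists_lt_of_csInf_lt hne₁ (show a < a + ε / 2 by linarith)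
      obtain ⟨r', hr'S, hr'⟩ := exists_lt_of_csInf_lt hne₂ (show b < b + ε / 2 by linarith)
      rcases lt_or_ge (r + r') 1 with h1 | h1
      · have := csInf_le (bddBelow_prokSet (M := M) (μ : Measure X) (τ : Measure X) (t + s))
          (mem_prokSet_add hM hgen ht hs hrS hr'S h1)
        rw [← hc] at this
        linarith
      · linarith
    have ha0 : 0 ≤ a := prokSet_nonneg (M := M) (μ : Measure X) (ν : Measure X) t
    have hb0 : 0 ≤ b := prokSet_nonneg (M := M) (ν : Measure X) (τ : Measure X) s
    rw [luk]
    apply max_le <;> linarith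
  · -- continuity in t
    intro μ ν
    rw [Metric.continuousOn_iff]
    intro t ht ε hε
    rw [mem_Ioi] at ht
    obtain ⟨δ, hδ0, hδt, hunif⟩ := unifCont hM hgen ht (half_pos hε)
    refine ⟨δ, hδ0, fun t' ht' hdist => ?_⟩
    rw [mem_Ioi] at ht'
    rw [Real.dist_eq, abs_lt] at hdist
    have ht'mem : t' ∈ Ioo (t - δ) (t + δ) := ⟨by linarith, by linarith⟩
    have htmem : t ∈ Ioo (t - δ) (t + δ) := ⟨by linarith, by linarith⟩
    have h1 := sInf_prokSet_close hM hgen (μ : Measure X) (ν : Measure X) ht hδ0 hδt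
      (half_pos hε) hunif ht'mem htmem
    have h2 := sInf_prokSet_close hM hgen (μ : Measure X) (ν : Measure X) ht hδ0 hδt
      (half_pos hε) hunif htmem ht'mem
    simp only [fuzzyProkhorov]
    rw [Real.dist_eq, abs_lt]
    constructor <;> linarith
end
end
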